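/- Assume h_{11} > h_{nn}. Then there exists p ∈ ℝ with p ≠ −1 such that 0 < A_{-{1}} < A_{-{n}} (so greedy selection by individual effects, LAGS, prefers copies of sample n) while A_{-{1}^c} > A_{-{n}^c}, i.e., removing all c copies of sample 1 changes the prediction at x_test strictly more than removing all c copies of sample n. Hence LAGS fails to solve c-MISS due to amplification. -/

import Mathlib

open Matrix Finset

noncomputable section

/-- Gram matrix `XᵀX` of a design in which the row `xᵢ` appears with multiplicity `w i`. -/
def gramW {n d : ℕ} (X : Matrix (Fin n) (Fin d) ℝ) (w : Fin n → ℕ) :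
    Matrix (Fin d) (Fin d) ℝ :=
  ∑ i, (w i : ℝ) • vecMulVec (X i) (X i)

/-- OLS estimator for a design in which the row `xᵢ` (with label `y i`) appears with
multiplicity `w i`. -/
def olsW {n d : ℕ} (X : Matrix (Fin n) (Fin d) ℝ) (y : Fin n → ℝ) (w : Fin n → ℕ) :
    Fin d → ℝ :=
  (gramW X w)⁻¹ *ᵥ (∑ i, (w i : ℝ) • (y i • X i))

/-- (Cross-)leverage score `hᵢⱼ = xᵢᵀ N⁻¹ xⱼ` in the multiplicity-`w` design. -/
def levW {n d : ℕ} (X : Matrix (Fin n) (Fin d) ℝ) (w : Fin n → ℕ) (i j : Fin n) : ℝ :=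
  X i ⬝ᵥ ((gramW X w)⁻¹ *ᵥ X j)

/-- The generated labels: each copy of sample 1 has label `x₁ᵀθ* - ε`, each copy of
sample n has label `xₙᵀθ* - pε`, and sample i (middle) has label `xᵢᵀθ*`. -/
def ygen {n d : ℕ} (X : Matrix (Fin n) (Fin d) ℝ) (θstar : Fin d → ℝ) (ε p : ℝ)
    (i₁ iₙ : Fin n) : Fin n → ℝ :=
  fun i => X i ⬝ᵥ θstar - (if i = i₁ then ε else if i = iₙ then p * ε else 0)

/-- The test point `x_test = (x₁ + p xₙ)/(p+1)`. -/
def xtest {n d : ℕ} (X : Matrix (Fin n) (Fin d) ℝ) (p : ℝ) (i₁ iₙ : Fin n) :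
    Fin d → ℝ :=
  fun j => (X i₁ j + p * X iₙ j) / (p + 1)

/-- Actual effect `A₋ₛ = x_testᵀ(θ̂₋ₛ - θ̂)` of passing from the multiplicity-`w`
design to the multiplicity-`w'` design (removing some copies). -/
def AeffW {n d : ℕ} (X : Matrix (Fin n) (Fin d) ℝ) (θstar : Fin d → ℝ) (ε p : ℝ)
    (i₁ iₙ : Fin n) (w w' : Fin n → ℕ) : ℝ :=
  xtest X p i₁ iₙ ⬝ᵥ (olsW X (ygen X θstar ε p i₁ iₙ) w' - olsW X (ygen X θstar ε p i₁ iₙ) w)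

/-! ### Auxiliary lemmas -/

lemma vecMulVec_mulVec' {d : ℕ} (u v x : Fin d → ℝ) :
    vecMulVec u v *ᵥ x = (v ⬝ᵥ x) • u := by
  funext i
  simp only [mulVec, dotProduct, vecMulVec_apply, Pi.smul_apply, smul_eq_mul, Finset.sum_mul]
  exact Finset.sum_congr rfl fun j _ => by ring

lemma sum_mulVec' {n d : ℕ} (s : Finset (Fin n)) (A : Fin n → Matrix (Fin d) (Fin d) ℝ)
    (v : Fin d → ℝ) : (∑ i ∈ s, A i) *ᵥ v = ∑ i ∈ s, A i *ᵥ v := by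
  funext j
  simp only [mulVec, dotProduct, Finset.sum_apply, Matrix.sum_apply, Finset.sum_mul]
  exact Finset.sum_comm

lemma sumW_update {n : ℕ} {M : Type*} [AddCommGroup M] [Module ℝ M]
    (w : Fin n → ℕ) (j : Fin n) (k : ℕ) (f : Fin n → M) :
    ∑ i, ((Function.update w j k i : ℕ) : ℝ) • f i
      = (∑ i, (w i : ℝ) • f i) + (((k : ℝ) - (w j : ℝ)) • f j) := by
  have h : ∀ i : Fin n, ((Function.update w j k i : ℕ) : ℝ) • f i
      = (w i : ℝ) • f i + (if i = j then ((k : ℝ) - (w j : ℝ)) • f j else 0) := by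
    intro i
    rcases eq_or_ne i j with hij | hij
    · subst hij
      rw [if_pos rfl, Function.update_self, sub_smul]
      abel
    · rw [Function.update_of_ne hij, if_neg hij, add_zero]
  rw [Finset.sum_congr rfl fun i _ => h i, Finset.sum_add_distrib, Finset.sum_ite_eq' univ j]
  simp

lemma gramW_update {n d : ℕ} (X : Matrix (Fin n) (Fin d) ℝ) (w : Fin n → ℕ) (j : Fin n)
    (k : ℕ) : gramW X (Function.update w j k)
      = gramW X w + ((k : ℝ) - (w j : ℝ)) • vecMulVec (X j) (X j) := by
  unfold gramW
  exact sumW_update w j k _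

lemma olsW_mulVec {n d : ℕ} (X : Matrix (Fin n) (Fin d) ℝ) (y : Fin n → ℝ) (w : Fin n → ℕ)
    (hN : IsUnit (gramW X w).det) :
    gramW X w *ᵥ olsW X y w = ∑ i, (w i : ℝ) • (y i • X i) := by
  unfold olsW
  rw [mulVec_mulVec, Matrix.mul_nonsing_inv _ hN, one_mulVec]

lemma gramW_symm {n d : ℕ} (X : Matrix (Fin n) (Fin d) ℝ) (w : Fin n → ℕ) :
    (gramW X w)ᵀ = gramW X w := by
  ext i j
  simp only [gramW, transpose_apply, Matrix.sum_apply, Matrix.smul_apply, vecMulVec_apply,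
    smul_eq_mul]
  exact Finset.sum_congr rfl fun k _ => by ring

lemma levW_symm {n d : ℕ} (X : Matrix (Fin n) (Fin d) ℝ) (w : Fin n → ℕ) (i j : Fin n) :
    levW X w i j = levW X w j i := by
  unfold levW
  have h2 : ((gramW X w)⁻¹)ᵀ = (gramW X w)⁻¹ := by
    rw [Matrix.transpose_nonsing_inv, gramW_symm]
  rw [dotProduct_mulVec, ← mulVec_transpose, h2, dotProduct_comm]

lemma xtest_dot {n d : ℕ} (X : Matrix (Fin n) (Fin d) ℝ) (p : ℝ) (i₁ iₙ : Fin n)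
    (z : Fin d → ℝ) :
    xtest X p i₁ iₙ ⬝ᵥ z = (X i₁ ⬝ᵥ z + p * (X iₙ ⬝ᵥ z)) / (p + 1) := by
  simp only [xtest, dotProduct]
  rw [Finset.mul_sum, ← Finset.sum_add_distrib, Finset.sum_div]
  exact Finset.sum_congr rfl fun j _ => by ring

lemma sum_vmv_posSemidef {n d : ℕ} (X : Matrix (Fin n) (Fin d) ℝ)
    (s : Finset (Fin n)) (cw : Fin n → ℝ) (hcw : ∀ i, 0 ≤ cw i) :
    (∑ i ∈ s, cw i • vecMulVec (X i) (X i)).PosSemidef := by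
  refine PosSemidef.of_dotProduct_mulVec_nonneg ?_ ?_
  · ext i j
    simp only [conjTranspose_apply, Matrix.sum_apply, Matrix.smul_apply, vecMulVec_apply,
      smul_eq_mul, star_trivial, star_sum, star_mul', RCLike.star_def]
    exact Finset.sum_congr rfl fun k _ => by ring
  · intro x
    have hsx : star x = x := by simp
    rw [hsx, sum_mulVec']
    have : x ⬝ᵥ (∑ i ∈ s, (cw i • vecMulVec (X i) (X i)) *ᵥ x)
        = ∑ i ∈ s, x ⬝ᵥ ((cw i • vecMulVec (X i) (X i)) *ᵥ x) := by
      simp only [dotProduct, Finset.sum_apply, Finset.mul_sum]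
      exact Finset.sum_comm
    rw [this]
    refine Finset.sum_nonneg fun i _ => ?_
    rw [smul_mulVec, vecMulVec_mulVec', dotProduct_smul, dotProduct_smul,
      dotProduct_comm x (X i)]
    simp only [smul_eq_mul]
    nlinarith [hcw i, sq_nonneg (X i ⬝ᵥ x)]

lemma posDef_of_psd {d : ℕ} {M : Matrix (Fin d) (Fin d) ℝ}
    (h : M.PosSemidef) (hu : IsUnit M.det) : M.PosDef := by
  refine PosDef.of_dotProduct_mulVec_pos h.1 (fun x hx => ?_)
  rcases lt_or_eq_of_le (h.dotProduct_mulVec_nonneg x) with hlt | heq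
  · exact hlt
  · exfalso
    have hsx : star x = x := by simp
    have h0 : M *ᵥ x = 0 := (h.dotProduct_mulVec_zero_iff x).1 heq.symm
    have hinj : Function.Injective M.mulVec :=
      Matrix.mulVec_injective_iff_isUnit.2 ((Matrix.isUnit_iff_isUnit_det M).2 hu)
    exact hx (hinj (by simpa using h0))

lemma posDef_quad {d : ℕ} {M : Matrix (Fin d) (Fin d) ℝ} (hM : M.PosDef)
    {x : Fin d → ℝ} (hx : x ≠ 0) : 0 < x ⬝ᵥ (M *ᵥ x) := by
  have := hM.dotProduct_mulVec_pos hx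
  simpa using this

lemma AeffW_update {n d : ℕ} (X : Matrix (Fin n) (Fin d) ℝ) (θstar : Fin d → ℝ)
    (ε p : ℝ) (i₁ iₙ j : Fin n) (w : Fin n → ℕ) (k : ℕ)
    (hN : IsUnit (gramW X w).det)
    (hN' : IsUnit (gramW X (Function.update w j k)).det)
    (hden : 1 - ((w j : ℝ) - (k : ℝ)) * levW X w j j ≠ 0) :
    AeffW X θstar ε p i₁ iₙ w (Function.update w j k) =
      (xtest X p i₁ iₙ ⬝ᵥ ((gramW X w)⁻¹ *ᵥ X j)) *
        (((w j : ℝ) - (k : ℝ)) *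
            (X j ⬝ᵥ olsW X (ygen X θstar ε p i₁ iₙ) w - ygen X θstar ε p i₁ iₙ j)
          / (1 - ((w j : ℝ) - (k : ℝ)) * levW X w j j)) := by
  set y := ygen X θstar ε p i₁ iₙ with hy
  set t : ℝ := (w j : ℝ) - (k : ℝ) with ht
  set o := olsW X y w with ho
  set o' := olsW X y (Function.update w j k) with ho'
  set z := (gramW X w)⁻¹ *ᵥ X j with hz
  set μ : ℝ := t * (X j ⬝ᵥ o - y j) / (1 - t * levW X w j j) with hμ
  have hN'eq : gramW X (Function.update w j k)
      = gramW X w - t • vecMulVec (X j) (X j) := by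
    rw [gramW_update, ht, sub_smul]
    module
  have hNz : gramW X w *ᵥ z = X j := by
    rw [hz, mulVec_mulVec, Matrix.mul_nonsing_inv _ hN, one_mulVec]
  have hlevz : X j ⬝ᵥ z = levW X w j j := rfl
  have hNo : gramW X w *ᵥ o = ∑ i, (w i : ℝ) • (y i • X i) := by
    rw [ho]; exact olsW_mulVec X y w hN
  have hN'o' : gramW X (Function.update w j k) *ᵥ o'
      = ∑ i, ((Function.update w j k i : ℕ) : ℝ) • (y i • X i) := by
    rw [ho']; exact olsW_mulVec X y _ hN'
  have hL : gramW X (Function.update w j k) *ᵥ (o' - o)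
      = (t * (X j ⬝ᵥ o - y j)) • X j := by
    rw [mulVec_sub, hN'o', sumW_update, hN'eq, sub_mulVec, smul_mulVec,
      vecMulVec_mulVec', hNo, ht]
    module
  have hR : gramW X (Function.update w j k) *ᵥ (μ • z)
      = (t * (X j ⬝ᵥ o - y j)) • X j := by
    rw [mulVec_smul, hN'eq, sub_mulVec, smul_mulVec, vecMulVec_mulVec', hNz, hlevz]
    have hc : μ * (1 - t * levW X w j j) = t * (X j ⬝ᵥ o - y j) := by
      rw [hμ, div_mul_cancel₀ _ hden]
    rw [← hc]
    module
  have hinj : Function.Injective (gramW X (Function.update w j k)).mulVec :=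
    Matrix.mulVec_injective_iff_isUnit.2
      ((Matrix.isUnit_iff_isUnit_det _).2 hN')
  have hoo : o' - o = μ • z := hinj (hL.trans hR.symm)
  show xtest X p i₁ iₙ ⬝ᵥ (o' - o) = _
  rw [hoo, dotProduct_smul, smul_eq_mul, hμ]
  ring

lemma olsW_ygen {n d : ℕ} (X : Matrix (Fin n) (Fin d) ℝ) (θstar : Fin d → ℝ)
    (ε p : ℝ) (i₁ iₙ : Fin n) (w : Fin n → ℕ) (hne : i₁ ≠ iₙ)
    (hN : IsUnit (gramW X w).det) :
    olsW X (ygen X θstar ε p i₁ iₙ) w =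
      θstar - ((w i₁ : ℝ) * ε) • ((gramW X w)⁻¹ *ᵥ X i₁)
        - ((w iₙ : ℝ) * (p * ε)) • ((gramW X w)⁻¹ *ᵥ X iₙ) := by
  have h1 : ∀ i, (w i : ℝ) • (ygen X θstar ε p i₁ iₙ i • X i)
      = (w i : ℝ) • ((X i ⬝ᵥ θstar) • X i)
        - (w i : ℝ) • ((if i = i₁ then ε else if i = iₙ then p * ε else 0) • X i) := by
    intro i
    simp only [ygen, sub_smul, smul_sub]
  have hS1 : ∑ i, (w i : ℝ) • ((X i ⬝ᵥ θstar) • X i) = gramW X w *ᵥ θstar := by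
    rw [gramW, sum_mulVec']
    exact Finset.sum_congr rfl fun i _ => by
      rw [smul_mulVec, vecMulVec_mulVec']
  have hS2 : ∑ i, (w i : ℝ) • ((if i = i₁ then ε else if i = iₙ then p * ε else 0) • X i)
      = ((w i₁ : ℝ) * ε) • X i₁ + ((w iₙ : ℝ) * (p * ε)) • X iₙ := by
    rw [← Finset.sum_subset (Finset.subset_univ ({i₁, iₙ} : Finset (Fin n)))]
    · rw [Finset.sum_pair hne, if_pos rfl, if_neg (Ne.symm hne), if_pos rfl,
        smul_smul, smul_smul]
    · intro x _ hx
      simp only [Finset.mem_insert, Finset.mem_singleton] at hx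
      push_neg at hx
      rw [if_neg hx.1, if_neg hx.2, zero_smul, smul_zero]
  have hb : (∑ i, (w i : ℝ) • (ygen X θstar ε p i₁ iₙ i • X i))
      = gramW X w *ᵥ θstar - (((w i₁ : ℝ) * ε) • X i₁ + ((w iₙ : ℝ) * (p * ε)) • X iₙ) := by
    rw [Finset.sum_congr rfl fun i _ => h1 i, Finset.sum_sub_distrib, hS1, hS2]
  unfold olsW
  rw [hb, mulVec_sub, mulVec_mulVec, Matrix.nonsing_inv_mul _ hN, one_mulVec, mulVec_add,
    mulVec_smul, mulVec_smul]
  module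

lemma ivt_aux (F : ℝ → ℝ) (hcont : Continuous F) (p₁ : ℝ) (hp₁ : 0 < p₁)
    (h0 : F 0 < 0) (h1 : 0 < F p₁) : ∃ p, 0 < p ∧ p < p₁ ∧ F p = 0 := by
  obtain ⟨p, hp, hFp⟩ := intermediate_value_Icc (le_of_lt hp₁) hcont.continuousOn
    ⟨le_of_lt h0, le_of_lt h1⟩
  refine ⟨p, ?_, ?_, hFp⟩
  · rcases lt_or_eq_of_le hp.1 with h | h
    · exact h
    · exact absurd hFp (by rw [← h]; exact ne_of_lt h0)
  · rcases lt_or_eq_of_le hp.2 with h | h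
    · exact h
    · exact absurd hFp (by rw [h]; exact ne_of_gt h1)

set_option maxHeartbeats 1000000 in
lemma choose_p (C a b g : ℝ) (hC : 2 ≤ C) (ha : 0 < a) (hb : 0 < b)
    (hba : b < a) (h1 : 0 < 1 - C * a) (h2 : 0 < 1 - C * b)
    (hK1 : 0 < a * b - g ^ 2)
    (hK2 : 0 < (1 - C * a) * (1 - C * b) - C ^ 2 * g ^ 2) :
    ∃ p : ℝ, 0 < p ∧
      0 < (a + p * g) * (1 - C * a - C * p * g) ∧
      (1 - b) * ((a + p * g) * (1 - C * a - C * p * g))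
        < (1 - a) * ((g + p * b) * (p - C * g - C * p * b)) ∧
      (1 - C * a) * ((g + p * b) * (p - C * g - C * p * b))
        < (1 - C * b) * ((a + p * g) * (1 - C * a - C * p * g)) := by
  have hC0 : (0:ℝ) < C := by linarith
  have h1a : 0 < 1 - a := by nlinarith
  have h1b : 0 < 1 - b := by nlinarith
  obtain ⟨t, ht0, htl, htr⟩ : ∃ t : ℝ, 0 < t ∧ 1 - b < t * (1 - a) ∧
      t * (1 - C * a) < 1 - C * b := by
    have hrr : (1 - b) / (1 - a) < (1 - C * b) / (1 - C * a) := by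
      rw [div_lt_div_iff₀ h1a h1]
      nlinarith
    refine ⟨((1 - b) / (1 - a) + (1 - C * b) / (1 - C * a)) / 2, ?_, ?_, ?_⟩
    · have := div_pos h1b h1a
      have := div_pos h2 h1
      linarith
    · have h' : (1 - b) / (1 - a) < ((1 - b) / (1 - a) + (1 - C * b) / (1 - C * a)) / 2 := by
        linarith
      calc 1 - b = (1 - b) / (1 - a) * (1 - a) := by field_simp
        _ < _ := mul_lt_mul_of_pos_right h' h1a
    · have h' : ((1 - b) / (1 - a) + (1 - C * b) / (1 - C * a)) / 2
          < (1 - C * b) / (1 - C * a) := by linarith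
      calc _ < (1 - C * b) / (1 - C * a) * (1 - C * a) := mul_lt_mul_of_pos_right h' h1
        _ = 1 - C * b := by field_simp
  obtain ⟨p₁, hp₁pos, hφp₁, hUpos⟩ :
      ∃ p₁, 0 < p₁ ∧
        0 < (g + p₁ * b) * (p₁ - C * g - C * p₁ * b)
          - t * ((a + p₁ * g) * (1 - C * a - C * p₁ * g)) ∧
        ∀ q, 0 < q → q < p₁ → 0 < (a + q * g) * (1 - C * a - C * q * g) := by
    rcases lt_trichotomy g 0 with hg | hg | hg
    · have hg' : (0:ℝ) < -g := by linarith
      have hgne : g ≠ 0 := ne_of_lt hg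
      obtain ⟨P, hPpos, hPg⟩ : ∃ P : ℝ, 0 < P ∧ a + P * g = 0 :=
        ⟨a / (-g), div_pos ha hg', by field_simp; ring⟩
      refine ⟨P, hPpos, ?_, ?_⟩
      · have hz : t * ((a + P * g) * (1 - C * a - C * P * g)) = 0 := by
          rw [hPg]; ring
        rw [hz, sub_zero]
        have pos1 : 0 < g + P * b := by
          nlinarith [hK1, mul_pos hb hg', hPg]
        have pos2 : 0 < P - C * g - C * P * b := by
          nlinarith [mul_pos hPpos h2, mul_pos hC0 hg']
        exact mul_pos pos1 pos2
      · intro q hq hq2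
        have pos1 : 0 < a + q * g := by
          nlinarith [hPg, mul_pos (sub_pos.2 hq2) hg']
        have pos2 : 0 < 1 - C * a - C * q * g := by
          nlinarith [h1, mul_pos (mul_pos hC0 hq) hg']
        exact mul_pos pos1 pos2
    · subst hg
      have hD : (0:ℝ) < b * (1 - C * b) := mul_pos hb h2
      obtain ⟨P, hPgt1, hPD⟩ : ∃ P : ℝ, 1 < P ∧
          P * (b * (1 - C * b)) = t * a + b * (1 - C * b) :=
        ⟨(t * a + b * (1 - C * b)) / (b * (1 - C * b)),
          by rw [lt_div_iff₀ hD]; nlinarith [mul_pos ht0 ha],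
          div_mul_cancel₀ _ (ne_of_gt hD)⟩
      have hPpos : 0 < P := by linarith
      refine ⟨P, hPpos, ?_, ?_⟩
      · have hsq : P * (P * (b * (1 - C * b))) = P * (t * a + b * (1 - C * b)) := by
          rw [hPD]
        nlinarith [hsq, hPgt1, mul_pos ht0 ha, hD,
          mul_pos (mul_pos hC0 ht0) (mul_pos ha ha), hPD]
      · intro q hq hq2
        nlinarith [mul_pos ha h1]
    · have hCg : 0 < C * g := mul_pos hC0 hg
      obtain ⟨P, hPpos, hPg⟩ : ∃ P : ℝ, 0 < P ∧ 1 - C * a - C * P * g = 0 :=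
        ⟨(1 - C * a) / (C * g), div_pos h1 hCg, by field_simp; ring⟩
      refine ⟨P, hPpos, ?_, ?_⟩
      · have hz : t * ((a + P * g) * (1 - C * a - C * P * g)) = 0 := by
          rw [hPg]; ring
        rw [hz, sub_zero]
        have pos1 : 0 < g + P * b := by positivity
        have e : (C * g) * (P - C * g - C * P * b)
            = (1 - C * a) * (1 - C * b) - C ^ 2 * g ^ 2 := by
          linear_combination (C * b - 1) * hPg
        have pos2 : 0 < P - C * g - C * P * b := by
          nlinarith [e, hK2, hCg]
        exact mul_pos pos1 pos2
      · intro q hq hq2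
        have pos1 : 0 < a + q * g := by positivity
        have pos2 : 0 < 1 - C * a - C * q * g := by
          nlinarith [hPg, mul_pos (mul_pos hC0 (sub_pos.2 hq2)) hg]
        exact mul_pos pos1 pos2
  have hF0 : (g + 0 * b) * (0 - C * g - C * 0 * b)
      - t * ((a + 0 * g) * (1 - C * a - C * 0 * g)) < 0 := by
    nlinarith [mul_nonneg hC0.le (sq_nonneg g), mul_pos (mul_pos ht0 ha) h1]
  obtain ⟨p, hppos, hplt, hFp⟩ := ivt_aux
    (fun p => (g + p * b) * (p - C * g - C * p * b)
      - t * ((a + p * g) * (1 - C * a - C * p * g)))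
    (by fun_prop) p₁ hp₁pos hF0 hφp₁
  have hU : 0 < (a + p * g) * (1 - C * a - C * p * g) := hUpos p hppos hplt
  have hVt : (g + p * b) * (p - C * g - C * p * b)
      = t * ((a + p * g) * (1 - C * a - C * p * g)) := by
    have h' : (g + p * b) * (p - C * g - C * p * b)
        - t * ((a + p * g) * (1 - C * a - C * p * g)) = 0 := hFp
    linarith
  refine ⟨p, hppos, hU, ?_, ?_⟩
  · rw [hVt]
    nlinarith [mul_lt_mul_of_pos_right htl hU]
  · rw [hVt]
    nlinarith [mul_lt_mul_of_pos_right htr hU]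

set_option maxHeartbeats 4000000 in
/-- Theorem 3.5, failure of LAGS in c-MISS by amplification:
with `c ≥ 2` copies of `x₁` and of `xₙ` in the design and `h₁₁ > hₙₙ`, there is some
`p ≠ -1` such that `0 < A₋{1} < A₋{n}` (so greedy selection by individual effects
prefers copies of sample n) yet `A₋{1}ᶜ > A₋{n}ᶜ`. -/
theorem lags_fails_c_miss_amplification
    (n d c : ℕ) (hc : 2 ≤ c) (hn : 3 ≤ n) (hd : 0 < d)
    (X : Matrix (Fin n) (Fin d) ℝ) (θstar : Fin d → ℝ) (ε : ℝ) (hε : 0 < ε)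
    (i₁ iₙ : Fin n) (hi₁ : (i₁ : ℕ) = 0) (hiₙ : (iₙ : ℕ) = n - 1)
    (hone : ∀ i, X i ⟨0, hd⟩ = 1)
    -- the multiplicity function: `c` copies of samples 1 and n, one copy of the others
    (w : Fin n → ℕ) (hw : w = fun i => if i = i₁ ∨ i = iₙ then c else 1)
    (hN : IsUnit (gramW X w).det)
    (hmid : IsUnit (∑ i ∈ ({i₁, iₙ} : Finset (Fin n))ᶜ, vecMulVec (X i) (X i)).det)
    (hout₁ : IsUnit (gramW X (Function.update w i₁ (c - 1))).det)
    (houtₙ : IsUnit (gramW X (Function.update w iₙ (c - 1))).det)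
    (hout₁c : IsUnit (gramW X (Function.update w i₁ 0)).det)
    (houtₙc : IsUnit (gramW X (Function.update w iₙ 0)).det)
    (hlev : levW X w iₙ iₙ < levW X w i₁ i₁) :
    ∃ p : ℝ, p ≠ -1 ∧
      0 < AeffW X θstar ε p i₁ iₙ w (Function.update w i₁ (c - 1)) ∧
      AeffW X θstar ε p i₁ iₙ w (Function.update w i₁ (c - 1)) <
        AeffW X θstar ε p i₁ iₙ w (Function.update w iₙ (c - 1)) ∧
      AeffW X θstar ε p i₁ iₙ w (Function.update w iₙ 0) <
        AeffW X θstar ε p i₁ iₙ w (Function.update w i₁ 0) := by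
  have hne : i₁ ≠ iₙ := by
    intro h
    rw [h] at hi₁
    omega
  have hwi₁ : w i₁ = c := by rw [hw]; simp
  have hwiₙ : w iₙ = c := by rw [hw]; simp
  have hC2 : (2:ℝ) ≤ (c:ℝ) := by exact_mod_cast hc
  have hC0 : (0:ℝ) < (c:ℝ) := by linarith
  set C : ℝ := (c : ℝ) with hCdef
  set a := levW X w i₁ i₁ with hadef
  set b := levW X w iₙ iₙ with hbdef
  set g := levW X w i₁ iₙ with hgdef
  set N := gramW X w with hNdef
  -- basic vectors
  have hx₁ne : X i₁ ≠ 0 := by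
    intro h
    have h0 := congrFun h ⟨0, hd⟩
    rw [hone i₁] at h0
    simp at h0
  have hxₙne : X iₙ ≠ 0 := by
    intro h
    have h0 := congrFun h ⟨0, hd⟩
    rw [hone iₙ] at h0
    simp at h0
  -- positive definiteness of N
  have hNpsd : N.PosSemidef := by
    rw [hNdef]
    exact sum_vmv_posSemidef X univ (fun i => (w i : ℝ)) (fun i => Nat.cast_nonneg _)
  have hNpd : N.PosDef := posDef_of_psd hNpsd hN
  set z₁ := N⁻¹ *ᵥ X i₁ with hz₁def
  set zₙ := N⁻¹ *ᵥ X iₙ with hzₙdef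
  have hNz₁ : N *ᵥ z₁ = X i₁ := by
    rw [hz₁def, mulVec_mulVec, Matrix.mul_nonsing_inv _ hN, one_mulVec]
  have hNzₙ : N *ᵥ zₙ = X iₙ := by
    rw [hzₙdef, mulVec_mulVec, Matrix.mul_nonsing_inv _ hN, one_mulVec]
  -- dot product identities
  have ea : X i₁ ⬝ᵥ z₁ = a := rfl
  have e1n : X i₁ ⬝ᵥ zₙ = g := rfl
  have enn : X iₙ ⬝ᵥ zₙ = b := rfl
  have en1 : X iₙ ⬝ᵥ z₁ = g := by
    have h' : levW X w iₙ i₁ = levW X w i₁ iₙ := levW_symm X w iₙ i₁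
    show levW X w iₙ i₁ = g
    rw [h', ← hgdef]
  -- linear independence of X i₁ and X iₙ
  have hindep : ∀ s t : ℝ, s • X i₁ + t • X iₙ = 0 → s = 0 ∧ t = 0 := by
    intro s t h
    have h0 := congrFun h ⟨0, hd⟩
    simp only [Pi.add_apply, Pi.smul_apply, Pi.zero_apply, smul_eq_mul, hone i₁, hone iₙ,
      mul_one] at h0
    by_cases hs : s = 0
    · subst hs
      constructor
      · rfl
      · linarith
    · exfalso
      have hXeq : X i₁ = X iₙ := by
        have ht' : t = -s := by linarith
        rw [ht'] at h
        funext j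
        have hj := congrFun h j
        simp only [Pi.add_apply, Pi.smul_apply, Pi.zero_apply, smul_eq_mul, neg_mul] at hj
        have : s * (X i₁ j - X iₙ j) = 0 := by ring_nf; linarith
        rcases mul_eq_zero.1 this with h' | h'
        · exact absurd h' hs
        · linarith
      have : a = b := by rw [hadef, hbdef, levW, levW, hXeq]
      rw [this] at hlev
      exact lt_irrefl _ hlev
  have hu : ∀ s t : ℝ, (s ≠ 0 ∨ t ≠ 0) → s • z₁ + t • zₙ ≠ 0 := by
    intro s t hst h
    have h' : N *ᵥ (s • z₁ + t • zₙ) = 0 := by rw [h, mulVec_zero]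
    rw [mulVec_add, mulVec_smul, mulVec_smul, hNz₁, hNzₙ] at h'
    obtain ⟨hs0, ht0⟩ := hindep s t h'
    rcases hst with h'' | h'' <;> exact h'' (by assumption)
  -- quadratic form in N
  have hQN : ∀ s t : ℝ, (s ≠ 0 ∨ t ≠ 0) →
      0 < s^2*a + 2*s*t*g + t^2*b := by
    intro s t hst
    have hq := posDef_quad hNpd (hu s t hst)
    rw [mulVec_add, mulVec_smul, mulVec_smul, hNz₁, hNzₙ] at hq
    simp only [dotProduct_add, add_dotProduct, dotProduct_smul, smul_dotProduct,
      smul_eq_mul, dotProduct_comm z₁ (X i₁), dotProduct_comm zₙ (X i₁),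
      dotProduct_comm z₁ (X iₙ), dotProduct_comm zₙ (X iₙ), ea, e1n, en1, enn] at hq
    nlinarith [hq]
  -- quadratic form in the middle matrix S
  set S := ∑ i ∈ ({i₁, iₙ} : Finset (Fin n))ᶜ, vecMulVec (X i) (X i) with hSdef
  have hSpsd : S.PosSemidef := by
    have h' := sum_vmv_posSemidef X (({i₁, iₙ} : Finset (Fin n))ᶜ) (fun _ => (1:ℝ))
      (fun _ => zero_le_one)
    have e : ∑ i ∈ ({i₁, iₙ} : Finset (Fin n))ᶜ, (1:ℝ) • vecMulVec (X i) (X i) = S := by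
      rw [hSdef]
      exact Finset.sum_congr rfl fun i _ => one_smul _ _
    rwa [e] at h'
  have hSpd : S.PosDef := posDef_of_psd hSpsd hmid
  have hNS : N = C • vecMulVec (X i₁) (X i₁) + C • vecMulVec (X iₙ) (X iₙ) + S := by
    rw [hNdef]
    show gramW X w = _
    unfold gramW
    rw [← Finset.sum_add_sum_compl ({i₁, iₙ} : Finset (Fin n))]
    congr 1
    · rw [Finset.sum_pair hne, hwi₁, hwiₙ, ← hCdef]
    · rw [hSdef]
      refine Finset.sum_congr rfl fun i hi => ?_
      simp only [Finset.mem_compl, Finset.mem_insert, Finset.mem_singleton] at hi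
      push_neg at hi
      rw [hw]
      simp only [hi.1, hi.2, or_self, if_false]
      norm_num
  have hQS : ∀ s t : ℝ, (s ≠ 0 ∨ t ≠ 0) →
      0 < s^2*a + 2*s*t*g + t^2*b - C*(s*a+t*g)^2 - C*(s*g+t*b)^2 := by
    intro s t hst
    have hq := posDef_quad hSpd (hu s t hst)
    have hSeq : S = N - C • vecMulVec (X i₁) (X i₁) - C • vecMulVec (X iₙ) (X iₙ) := by
      rw [hNS]; abel
    rw [hSeq, sub_mulVec, sub_mulVec, smul_mulVec, smul_mulVec,
      vecMulVec_mulVec', vecMulVec_mulVec', mulVec_add, mulVec_smul, mulVec_smul,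
      hNz₁, hNzₙ] at hq
    simp only [dotProduct_sub, dotProduct_add, add_dotProduct, dotProduct_smul,
      smul_dotProduct, smul_eq_mul, dotProduct_comm z₁ (X i₁), dotProduct_comm zₙ (X i₁),
      dotProduct_comm z₁ (X iₙ), dotProduct_comm zₙ (X iₙ), ea, e1n, en1, enn] at hq
    nlinarith [hq]
  -- positivity facts
  have hz₁ne : z₁ ≠ 0 := by
    intro h
    apply hx₁ne
    rw [← hNz₁, h, mulVec_zero]
  have hzₙne : zₙ ≠ 0 := by
    intro h
    apply hxₙne
    rw [← hNzₙ, h, mulVec_zero]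
  have hapos : 0 < a := by
    have := hQN 1 0 (Or.inl one_ne_zero)
    nlinarith [this]
  have hbpos : 0 < b := by
    have := hQN 0 1 (Or.inr one_ne_zero)
    nlinarith [this]
  have hA : 0 < a - C*a^2 - C*g^2 := by
    have := hQS 1 0 (Or.inl one_ne_zero)
    nlinarith [this]
  have hCc : 0 < b - C*g^2 - C*b^2 := by
    have := hQS 0 1 (Or.inr one_ne_zero)
    nlinarith [this]
  have h1Ca : 0 < 1 - C*a := by
    nlinarith [hA, mul_nonneg hC0.le (sq_nonneg g), hapos]
  have h1Cb : 0 < 1 - C*b := by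
    nlinarith [hCc, mul_nonneg hC0.le (sq_nonneg g), hbpos]
  have h1a : 0 < 1 - a := by nlinarith
  have h1b : 0 < 1 - b := by nlinarith
  have hK1 : 0 < a*b - g^2 := by
    have h' := hQN g (-a) (Or.inr (by intro h''; rw [neg_eq_zero] at h''; exact absurd h'' (ne_of_gt hapos)))
    nlinarith [h', hapos]
  have hK2 : 0 < (1 - C*a)*(1 - C*b) - C^2*g^2 := by
    have hs := hQS (-(g - C*a*g - C*g*b)) (a - C*a^2 - C*g^2) (Or.inr (ne_of_gt hA))
    have hid : (-(g - C*a*g - C*g*b))^2*a + 2*(-(g - C*a*g - C*g*b))*(a - C*a^2 - C*g^2)*g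
          + (a - C*a^2 - C*g^2)^2*b
          - C*((-(g - C*a*g - C*g*b))*a + (a - C*a^2 - C*g^2)*g)^2
          - C*((-(g - C*a*g - C*g*b))*g + (a - C*a^2 - C*g^2)*b)^2
        = (a - C*a^2 - C*g^2) * ((a*b - g^2) * ((1 - C*a)*(1 - C*b) - C^2*g^2)) := by
      ring
    rw [hid] at hs
    by_contra hcon
    push_neg at hcon
    nlinarith [hs, mul_nonneg (mul_nonneg hA.le hK1.le) (neg_nonneg.2 hcon)]
  -- choose p
  obtain ⟨p, hppos, hU, hUV, hVU⟩ := choose_p C a b g hC2 hapos hbpos hlev h1Ca h1Cb hK1 hK2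
  have hp1 : (0:ℝ) < p + 1 := by linarith
  -- cast facts
  have hct : ((c - 1 : ℕ) : ℝ) = C - 1 := by
    have h1c : (1:ℕ) ≤ c := by omega
    rw [Nat.cast_sub h1c, hCdef]
    norm_num
  have ht₁ : (w i₁ : ℝ) - ((c - 1 : ℕ) : ℝ) = 1 := by rw [hwi₁, hct, ← hCdef]; ring
  have htₙ : (w iₙ : ℝ) - ((c - 1 : ℕ) : ℝ) = 1 := by rw [hwiₙ, hct, ← hCdef]; ring
  have ht₁c : (w i₁ : ℝ) - ((0 : ℕ) : ℝ) = C := by rw [hwi₁, ← hCdef]; norm_num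
  have htₙc : (w iₙ : ℝ) - ((0 : ℕ) : ℝ) = C := by rw [hwiₙ, ← hCdef]; norm_num
  -- residual identities
  have ho : olsW X (ygen X θstar ε p i₁ iₙ) w
      = θstar - (C * ε) • z₁ - (C * (p * ε)) • zₙ := by
    rw [olsW_ygen X θstar ε p i₁ iₙ w hne hN, hwi₁, hwiₙ, ← hCdef, ← hNdef, ← hz₁def, ← hzₙdef]
  have hr₁ : X i₁ ⬝ᵥ olsW X (ygen X θstar ε p i₁ iₙ) w - ygen X θstar ε p i₁ iₙ i₁
      = ε * (1 - C*a - C*p*g) := by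
    rw [ho]
    simp only [ygen, eq_self_iff_true, if_true, dotProduct_sub, dotProduct_smul,
      smul_eq_mul, ea, e1n]
    ring
  have hrₙ : X iₙ ⬝ᵥ olsW X (ygen X θstar ε p i₁ iₙ) w - ygen X θstar ε p i₁ iₙ iₙ
      = ε * (p - C*g - C*p*b) := by
    rw [ho]
    simp only [ygen, if_neg (Ne.symm hne), eq_self_iff_true, if_true, dotProduct_sub,
      dotProduct_smul, smul_eq_mul, en1, enn]
    ring
  -- test-point dot products
  have hx1 : xtest X p i₁ iₙ ⬝ᵥ z₁ = (a + p*g) / (p + 1) := by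
    rw [xtest_dot, ea, en1]
  have hxn : xtest X p i₁ iₙ ⬝ᵥ zₙ = (g + p*b) / (p + 1) := by
    rw [xtest_dot, e1n, enn]
  have hp1' : p + 1 ≠ 0 := ne_of_gt hp1
  have h1a' : 1 - a ≠ 0 := ne_of_gt h1a
  have h1b' : 1 - b ≠ 0 := ne_of_gt h1b
  have h1Ca' : 1 - C*a ≠ 0 := ne_of_gt h1Ca
  have h1Cb' : 1 - C*b ≠ 0 := ne_of_gt h1Cb
  -- the four effect formulas
  have hA1 : AeffW X θstar ε p i₁ iₙ w (Function.update w i₁ (c - 1))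
      = ε * ((a + p*g) * (1 - C*a - C*p*g)) / ((p + 1) * (1 - a)) := by
    rw [AeffW_update X θstar ε p i₁ iₙ i₁ w (c-1) hN hout₁
        (by rw [ht₁, ← hadef]; exact ne_of_gt (by nlinarith)),
      ht₁, ← hadef, ← hNdef, ← hz₁def, hx1, hr₁]
    field_simp
  have hAn : AeffW X θstar ε p i₁ iₙ w (Function.update w iₙ (c - 1))
      = ε * ((g + p*b) * (p - C*g - C*p*b)) / ((p + 1) * (1 - b)) := by
    rw [AeffW_update X θstar ε p i₁ iₙ iₙ w (c-1) hN houtₙ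
        (by rw [htₙ, ← hbdef]; exact ne_of_gt (by nlinarith)),
      htₙ, ← hbdef, ← hNdef, ← hzₙdef, hxn, hrₙ]
    field_simp
  have hA1c : AeffW X θstar ε p i₁ iₙ w (Function.update w i₁ 0)
      = C * ε * ((a + p*g) * (1 - C*a - C*p*g)) / ((p + 1) * (1 - C*a)) := by
    rw [AeffW_update X θstar ε p i₁ iₙ i₁ w 0 hN hout₁c
        (by rw [ht₁c, ← hadef]; exact ne_of_gt (by nlinarith)),
      ht₁c, ← hadef, ← hNdef, ← hz₁def, hx1, hr₁]
    field_simp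
  have hAnc : AeffW X θstar ε p i₁ iₙ w (Function.update w iₙ 0)
      = C * ε * ((g + p*b) * (p - C*g - C*p*b)) / ((p + 1) * (1 - C*b)) := by
    rw [AeffW_update X θstar ε p i₁ iₙ iₙ w 0 hN houtₙc
        (by rw [htₙc, ← hbdef]; exact ne_of_gt (by nlinarith)),
      htₙc, ← hbdef, ← hNdef, ← hzₙdef, hxn, hrₙ]
    field_simp
  refine ⟨p, ne_of_gt (by linarith : (-1:ℝ) < p), ?_, ?_, ?_⟩
  · rw [hA1]
    exact div_pos (mul_pos hε hU) (mul_pos hp1 h1a)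
  · rw [hA1, hAn]
    rw [div_lt_div_iff₀ (mul_pos hp1 h1a) (mul_pos hp1 h1b)]
    calc ε * ((a + p*g) * (1 - C*a - C*p*g)) * ((p + 1) * (1 - b))
        = (ε * (p + 1)) * ((1 - b) * ((a + p*g) * (1 - C*a - C*p*g))) := by ring
      _ < (ε * (p + 1)) * ((1 - a) * ((g + p*b) * (p - C*g - C*p*b))) :=
          mul_lt_mul_of_pos_left hUV (mul_pos hε hp1)
      _ = ε * ((g + p*b) * (p - C*g - C*p*b)) * ((p + 1) * (1 - a)) := by ring
  · rw [hAnc, hA1c]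
    rw [div_lt_div_iff₀ (mul_pos hp1 h1Cb) (mul_pos hp1 h1Ca)]
    calc C * ε * ((g + p*b) * (p - C*g - C*p*b)) * ((p + 1) * (1 - C*a))
        = (C * ε * (p + 1)) * ((1 - C*a) * ((g + p*b) * (p - C*g - C*p*b))) := by ring
      _ < (C * ε * (p + 1)) * ((1 - C*b) * ((a + p*g) * (1 - C*a - C*p*g))) :=
          mul_lt_mul_of_pos_left hVU (mul_pos (mul_pos hC0 hε) hp1)
      _ = C * ε * ((a + p*g) * (1 - C*a - C*p*g)) * ((p + 1) * (1 - C*b)) := by ring
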